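/- Let M be an n×n real symmetric matrix whose eigenvalues all lie in [0, ρ] with 0 < ρ < 1, and set γ = (1 − √(1−ρ))/(1 + √(1−ρ)). Then for every integer k ≥ 1 there exists a real polynomial p of degree at most k with p(1) = 1 such that ‖p(M)‖ ≤ 2γᵏ/(1 + γ^{2k}), where p(M) denotes the matrix obtained by evaluating p at M and ‖·‖ is the operator norm. In particular, for every e₀ ∈ ℝⁿ, min over real polynomials p of degree at most k with p(1)=1 of ‖p(M)e₀‖ is at most (2γᵏ/(1+γ^{2k}))‖e₀‖. -/

import Mathlib

open scoped RealInnerProductSpace Matrix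
open Polynomial

private lemma cheb_eval_half (w : ℝ) (hw : w ≠ 0) :
    ∀ m : ℕ, (Polynomial.Chebyshev.T ℝ m).eval ((w + w⁻¹) / 2) = (w ^ m + w⁻¹ ^ m) / 2 := by
  have key : ∀ m : ℕ,
      (Polynomial.Chebyshev.T ℝ m).eval ((w + w⁻¹) / 2) = (w ^ m + w⁻¹ ^ m) / 2 ∧
      (Polynomial.Chebyshev.T ℝ (m + 1)).eval ((w + w⁻¹) / 2) = (w ^ (m + 1) + w⁻¹ ^ (m + 1)) / 2 := by
    intro m
    induction m with
    | zero => simp [Polynomial.Chebyshev.T_zero, Polynomial.Chebyshev.T_one]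
    | succ m ih =>
      obtain ⟨h1, h2⟩ := ih
      refine ⟨h2, ?_⟩
      have hcast : ((m + 1 : ℕ) : ℤ) + 1 = (m : ℤ) + 2 := by push_cast; ring
      rw [hcast, Polynomial.Chebyshev.T_add_two]
      simp only [Polynomial.eval_sub, Polynomial.eval_mul, Polynomial.eval_ofNat,
        Polynomial.eval_X, h2, h1]
      have hinv : w * w⁻¹ = 1 := mul_inv_cancel₀ hw
      field_simp
      ring_nf
      linear_combination (w * w⁻¹ ^ m - w⁻¹ * w⁻¹ ^ m) * hinv
  exact fun m => (key m).1

private lemma cheb_natDegree_le : ∀ m : ℕ, (Polynomial.Chebyshev.T ℝ m).natDegree ≤ m := by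
  have key : ∀ m : ℕ, (Polynomial.Chebyshev.T ℝ m).natDegree ≤ m ∧
      (Polynomial.Chebyshev.T ℝ (m + 1)).natDegree ≤ m + 1 := by
    intro m
    induction m with
    | zero => simp [Polynomial.Chebyshev.T_zero, Polynomial.Chebyshev.T_one]
    | succ m ih =>
      obtain ⟨h1, h2⟩ := ih
      refine ⟨h2, ?_⟩
      have hcast : ((m + 1 : ℕ) : ℤ) + 1 = (m : ℤ) + 2 := by push_cast; ring
      rw [hcast, Polynomial.Chebyshev.T_add_two]
      refine (Polynomial.natDegree_sub_le _ _).trans ?_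
      have hX : ((2 : ℝ[X]) * Polynomial.X).natDegree ≤ 1 :=
        (Polynomial.natDegree_mul_le).trans (by simp)
      have := (Polynomial.natDegree_mul_le
        (p := (2 : ℝ[X]) * Polynomial.X) (q := Polynomial.Chebyshev.T ℝ ((m : ℤ) + 1)))
      omega
  exact fun m => (key m).1

private lemma cheb_abs_le (m : ℕ) (x : ℝ) (hx1 : -1 ≤ x) (hx2 : x ≤ 1) :
    |(Polynomial.Chebyshev.T ℝ m).eval x| ≤ 1 := by
  have hx : x = Real.cos (Real.arccos x) := (Real.cos_arccos hx1 hx2).symm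
  rw [hx, Polynomial.Chebyshev.T_real_cos]
  exact Real.abs_cos_le_one _

private lemma aeval_mulVec {N : ℕ} (M : Matrix (Fin N) (Fin N) ℝ) (w : Fin N → ℝ) (μ : ℝ)
    (h : M *ᵥ w = μ • w) (q : Polynomial ℝ) :
    (Polynomial.aeval M q : Matrix (Fin N) (Fin N) ℝ) *ᵥ w = q.eval μ • w := by
  induction q using Polynomial.induction_on' with
  | add p q hp hq => simp [map_add, Matrix.add_mulVec, hp, hq, add_smul]
  | monomial m a =>
    have hpow : ∀ j : ℕ, (M ^ j) *ᵥ w = μ ^ j • w := by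
      intro j
      induction j with
      | zero => simp [Matrix.one_mulVec]
      | succ j ih =>
        rw [pow_succ, ← Matrix.mulVec_mulVec, h, Matrix.mulVec_smul, ih, smul_smul, pow_succ]
        ring_nf
    rw [Polynomial.aeval_monomial, ← Matrix.mulVec_mulVec, hpow,
      Algebra.algebraMap_eq_smul_one, Matrix.mulVec_smul, Matrix.smul_mulVec,
      Matrix.one_mulVec, Polynomial.eval_monomial, smul_smul]
    rw [mul_comm]

private lemma toEuclideanLin_aeval_eigen {N : ℕ} (M : Matrix (Fin N) (Fin N) ℝ)
    (q : Polynomial ℝ) (x : EuclideanSpace ℝ (Fin N)) (μ : ℝ)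
    (h : M *ᵥ (x : Fin N → ℝ) = μ • (x : Fin N → ℝ)) :
    Matrix.toEuclideanLin (Polynomial.aeval M q) x = q.eval μ • x := by
  have h2 := aeval_mulVec M (x : Fin N → ℝ) μ h q
  ext j
  have := congrFun h2 j
  simpa [Matrix.toEuclideanLin_apply] using this

private lemma spectral_bound {N : ℕ} (M : Matrix (Fin N) (Fin N) ℝ) (hherm : M.IsHermitian)
    (q : Polynomial ℝ) (B : ℝ) (hB : 0 ≤ B)
    (hq : ∀ i, |q.eval (hherm.eigenvalues i)| ≤ B)
    (v : EuclideanSpace ℝ (Fin N)) :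
    ‖Matrix.toEuclideanLin (Polynomial.aeval M q) v‖ ≤ B * ‖v‖ := by
  classical
  set b := hherm.eigenvectorBasis with hb
  set μ := hherm.eigenvalues with hμ
  set c : Fin N → ℝ := fun i => b.repr v i with hc
  have hv : ∑ i, c i • b i = v := b.sum_repr v
  have happ : Matrix.toEuclideanLin (Polynomial.aeval M q) v
      = ∑ i, (c i * q.eval (μ i)) • b i := by
    conv_lhs => rw [← hv]
    rw [map_sum]
    refine Finset.sum_congr rfl fun i _ => ?_
    rw [map_smul, toEuclideanLin_aeval_eigen M q (b i) (μ i)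
      (hherm.mulVec_eigenvectorBasis i), smul_smul]
  have horth := b.orthonormal
  have hn1 : ‖Matrix.toEuclideanLin (Polynomial.aeval M q) v‖ ^ 2
      = ∑ i, (c i * q.eval (μ i)) ^ 2 := by
    rw [happ, ← real_inner_self_eq_norm_sq, horth.inner_sum]
    simp [sq]
  have hn2 : ‖v‖ ^ 2 = ∑ i, c i ^ 2 := by
    conv_lhs => rw [← hv]
    rw [← real_inner_self_eq_norm_sq, horth.inner_sum]
    simp [sq]
  have hsum : ∑ i, (c i * q.eval (μ i)) ^ 2 ≤ B ^ 2 * ∑ i, c i ^ 2 := by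
    rw [Finset.mul_sum]
    refine Finset.sum_le_sum fun i _ => ?_
    have h1 := hq i
    have h2 : (q.eval (μ i)) ^ 2 ≤ B ^ 2 := by
      have := abs_le.1 h1
      nlinarith
    nlinarith [sq_nonneg (c i)]
  have hfin : ‖Matrix.toEuclideanLin (Polynomial.aeval M q) v‖ ^ 2 ≤ (B * ‖v‖) ^ 2 := by
    rw [hn1, mul_pow, hn2]
    exact hsum
  nlinarith [norm_nonneg (Matrix.toEuclideanLin (Polynomial.aeval M q) v), norm_nonneg v,
    mul_nonneg hB (norm_nonneg v)]

theorem chebyshev_poly_matrix_bound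
    (n : ℕ)
    (M : Matrix (Fin n) (Fin n) ℝ) (hM : M.IsSymm)
    (ρ : ℝ) (hρ0 : 0 < ρ) (hρ1 : ρ < 1)
    (hspec : ∀ v : EuclideanSpace ℝ (Fin n),
      0 ≤ ⟪Matrix.toEuclideanLin M v, v⟫ ∧
      ⟪Matrix.toEuclideanLin M v, v⟫ ≤ ρ * ‖v‖ ^ 2)
    (γ : ℝ) (hγ : γ = (1 - Real.sqrt (1 - ρ)) / (1 + Real.sqrt (1 - ρ)))
    (k : ℕ) (hk : 1 ≤ k) :
    (∃ p : Polynomial ℝ, p.natDegree ≤ k ∧ p.eval 1 = 1 ∧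
      ∀ v : EuclideanSpace ℝ (Fin n),
        ‖Matrix.toEuclideanLin (Polynomial.aeval M p) v‖ ≤
          (2 * γ ^ k / (1 + γ ^ (2 * k))) * ‖v‖) ∧
    (∀ e₀ : EuclideanSpace ℝ (Fin n),
      ∃ p : Polynomial ℝ, p.natDegree ≤ k ∧ p.eval 1 = 1 ∧
        ‖Matrix.toEuclideanLin (Polynomial.aeval M p) e₀‖ ≤
          (2 * γ ^ k / (1 + γ ^ (2 * k))) * ‖e₀‖) := by
  classical
  -- basic facts about s = √(1-ρ) and γ
  set s := Real.sqrt (1 - ρ) with hs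
  have h1ρ : (0:ℝ) < 1 - ρ := by linarith
  have hs0 : 0 < s := Real.sqrt_pos.2 h1ρ
  have hs2 : s ^ 2 = 1 - ρ := Real.sq_sqrt (le_of_lt h1ρ)
  have hs1 : s < 1 := by nlinarith
  have h1ps : (0:ℝ) < 1 + s := by linarith
  have h1ms : (0:ℝ) < 1 - s := by linarith
  have hγ0 : 0 < γ := by rw [hγ]; positivity
  have hγ1 : γ < 1 := by
    rw [hγ, div_lt_one h1ps]; linarith
  have hγk0 : 0 < γ ^ k := pow_pos hγ0 k
  have hγ2k0 : 0 < 1 + γ ^ (2 * k) := by positivity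
  -- hermitian structure
  have hherm : M.IsHermitian := by
    rwa [Matrix.IsHermitian, Matrix.conjTranspose_eq_transpose_of_trivial]
  set b := hherm.eigenvectorBasis with hb
  set μ := hherm.eigenvalues with hμ
  have hev : ∀ i, 0 ≤ μ i ∧ μ i ≤ ρ := by
    intro i
    have h1 := hspec (b i)
    have h2 : Matrix.toEuclideanLin M (b i) = μ i • b i := by
      have h3 := hherm.mulVec_eigenvectorBasis i
      ext j
      have := congrFun h3 j
      simpa [Matrix.toEuclideanLin_apply] using this
    have hnorm : ‖b i‖ = 1 := b.orthonormal.1 i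
    rw [h2, real_inner_smul_left, real_inner_self_eq_norm_sq, hnorm] at h1
    simp only [one_pow, mul_one] at h1
    constructor
    · nlinarith [h1.1]
    · nlinarith [h1.2, hnorm]
  -- the Chebyshev polynomial
  set Tc : ℝ := (1 + γ ^ (2 * k)) / (2 * γ ^ k) with hTc
  have hTc0 : 0 < Tc := by positivity
  set q : Polynomial ℝ :=
    (Polynomial.Chebyshev.T ℝ k).comp (Polynomial.C (2 / ρ) * Polynomial.X - 1) with hq
  set p : Polynomial ℝ := Polynomial.C Tc⁻¹ * q with hp
  -- the key point value
  have hcγ : 2 / ρ - 1 = (γ + γ⁻¹) / 2 := by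
    rw [hγ, inv_div]
    have hρ : ρ = (1 - s) * (1 + s) := by nlinarith
    rw [hρ]
    field_simp
    ring
  have hq1 : q.eval 1 = Tc := by
    rw [hq, Polynomial.eval_comp]
    simp only [Polynomial.eval_sub, Polynomial.eval_mul, Polynomial.eval_C,
      Polynomial.eval_X, Polynomial.eval_one, mul_one]
    rw [hcγ, cheb_eval_half γ (ne_of_gt hγ0) k, hTc]
    have h2k : γ ^ (2 * k) = γ ^ k * γ ^ k := by rw [two_mul, pow_add]
    rw [inv_pow, h2k]
    field_simp
    ring
  have hp1 : p.eval 1 = 1 := by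
    rw [hp, Polynomial.eval_mul, Polynomial.eval_C, hq1]
    exact inv_mul_cancel₀ (ne_of_gt hTc0)
  -- degree
  have hpdeg : p.natDegree ≤ k := by
    rw [hp]
    refine (Polynomial.natDegree_C_mul_le _ _).trans ?_
    rw [hq]
    refine (Polynomial.natDegree_comp_le).trans ?_
    have h1 : (Polynomial.C (2 / ρ) * Polynomial.X - 1 : ℝ[X]).natDegree ≤ 1 := by
      refine (Polynomial.natDegree_sub_le _ _).trans ?_
      have h2 : (Polynomial.C (2 / ρ) * Polynomial.X : ℝ[X]).natDegree ≤ 1 :=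
        (Polynomial.natDegree_C_mul_le _ _).trans Polynomial.natDegree_X_le
      simp only [Polynomial.natDegree_one]
      omega
    have h3 := cheb_natDegree_le k
    calc (Polynomial.Chebyshev.T ℝ k).natDegree *
          (Polynomial.C (2 / ρ) * Polynomial.X - 1 : ℝ[X]).natDegree
        ≤ k * 1 := Nat.mul_le_mul h3 h1
      _ = k := mul_one k
  -- bound on eigenvalue evaluations
  have hB : 2 * γ ^ k / (1 + γ ^ (2 * k)) = Tc⁻¹ := by
    rw [hTc, inv_div]
  have hBpos : 0 < 2 * γ ^ k / (1 + γ ^ (2 * k)) := by positivity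
  have hpq : ∀ i, |p.eval (μ i)| ≤ 2 * γ ^ k / (1 + γ ^ (2 * k)) := by
    intro i
    obtain ⟨h0, h1⟩ := hev i
    rw [hp, Polynomial.eval_mul, Polynomial.eval_C, hq, Polynomial.eval_comp]
    simp only [Polynomial.eval_sub, Polynomial.eval_mul, Polynomial.eval_C,
      Polynomial.eval_X, Polynomial.eval_one]
    have hx1 : -1 ≤ 2 / ρ * μ i - 1 := by
      have : 0 ≤ 2 / ρ * μ i := by positivity
      linarith
    have hx2 : 2 / ρ * μ i - 1 ≤ 1 := by
      have h2 : 2 / ρ * μ i ≤ 2 / ρ * ρ := by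
        apply mul_le_mul_of_nonneg_left h1
        positivity
      have h3 : 2 / ρ * ρ = 2 := by field_simp
      linarith
    have h4 := cheb_abs_le k (2 / ρ * μ i - 1) hx1 hx2
    rw [abs_mul, abs_of_pos (inv_pos.2 hTc0), hB]
    calc Tc⁻¹ * |(Polynomial.Chebyshev.T ℝ k).eval (2 / ρ * μ i - 1)|
        ≤ Tc⁻¹ * 1 := by
          apply mul_le_mul_of_nonneg_left h4
          positivity
      _ = Tc⁻¹ := mul_one _
  have hbound : ∀ v : EuclideanSpace ℝ (Fin n),
      ‖Matrix.toEuclideanLin (Polynomial.aeval M p) v‖ ≤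
        (2 * γ ^ k / (1 + γ ^ (2 * k))) * ‖v‖ :=
    spectral_bound M hherm p _ (le_of_lt hBpos) hpq
  exact ⟨⟨p, hpdeg, hp1, hbound⟩, fun e₀ => ⟨p, hpdeg, hp1, hbound e₀⟩⟩
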